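/- Symmetrization identity: let ω ∈ L¹(ℝ²) ∩ L^∞(ℝ²) with compact support, v = K * ω, and φ ∈ C¹_c(ℝ², ℝ²). Then ∫_{ℝ²} ω(x) v(x)^⊥ · φ(x) dx = ∬_{ℝ²×ℝ²} ω(x) ω(y) H̄_φ(x,y) dx dy, where H̄_φ(x,y) = (1/2) K(x−y)^⊥ · (φ(x) − φ(y)). -/

import Mathlib

open MeasureTheory Real Set Metric
open scoped RealInnerProductSpace

noncomputable def biotSavart (x : EuclideanSpace ℝ (Fin 2)) : EuclideanSpace ℝ (Fin 2) :=
  (2 * Real.pi * ‖x‖ ^ 2)⁻¹ • (WithLp.toLp 2 ![-(x 1), x 0] : EuclideanSpace ℝ (Fin 2))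

def perp (a : EuclideanSpace ℝ (Fin 2)) : EuclideanSpace ℝ (Fin 2) :=
  (WithLp.toLp 2 ![-(a 1), a 0] : EuclideanSpace ℝ (Fin 2))

local notation "E2" => EuclideanSpace ℝ (Fin 2)

def perpL : E2 →ₗ[ℝ] E2 where
  toFun := perp
  map_add' a b := by
    ext i; fin_cases i <;>
      simp [perp, PiLp.add_apply, Matrix.cons_val_zero, Matrix.cons_val_one] <;> ring
  map_smul' c a := by
    ext i; fin_cases i <;>
      simp [perp, PiLp.smul_apply, Matrix.cons_val_zero, Matrix.cons_val_one, smul_eq_mul] <;> ring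

noncomputable def perpCLM : E2 →L[ℝ] E2 := perpL.toContinuousLinearMap

lemma perpCLM_apply (a : E2) : perpCLM a = perp a := rfl

lemma perp_neg (a : E2) : perp (-a) = - perp a := map_neg perpL a

lemma norm_perp (a : E2) : ‖perp a‖ = ‖a‖ := by
  rw [EuclideanSpace.norm_eq, EuclideanSpace.norm_eq]
  congr 1
  rw [Fin.sum_univ_two, Fin.sum_univ_two]
  show ‖-(a 1)‖ ^ 2 + ‖a 0‖ ^ 2 = _
  simp only [Real.norm_eq_abs, sq_abs, neg_sq]
  ring

lemma biotSavart_def (x : E2) : biotSavart x = (2 * π * ‖x‖ ^ 2)⁻¹ • perp x := rfl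

lemma biotSavart_neg (x : E2) : biotSavart (-x) = - biotSavart x := by
  rw [biotSavart_def, biotSavart_def, norm_neg, perp_neg, smul_neg]

lemma norm_biotSavart (x : E2) : ‖biotSavart x‖ = (2 * π)⁻¹ * ‖x‖⁻¹ := by
  rw [biotSavart_def, norm_smul, norm_perp, Real.norm_eq_abs,
    abs_of_nonneg (by positivity)]
  rcases eq_or_ne x 0 with h | h
  · simp [h]
  · have hx : ‖x‖ ≠ 0 := norm_ne_zero_iff.mpr h
    have : (2:ℝ) * π ≠ 0 := by positivity
    field_simp

lemma measurable_biotSavart : Measurable biotSavart := by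
  have : Measurable fun x : E2 => (2 * π * ‖x‖ ^ 2)⁻¹ :=
    ((measurable_const.mul (measurable_norm.pow_const 2)).inv)
  exact this.smul perpCLM.continuous.measurable

lemma integrable_abs_rpow (R : ℝ) :
    Integrable ((Icc (-R) R).indicator fun t : ℝ => |t| ^ (-(2:ℝ)⁻¹)) := by
  rw [integrable_indicator_iff measurableSet_Icc]
  rcases le_or_gt R 0 with hR | hR
  · have : volume (Icc (-R) R) = 0 := by
      rw [Real.volume_Icc]
      exact ENNReal.ofReal_eq_zero.mpr (by linarith)
    unfold IntegrableOn
    rw [Measure.restrict_eq_zero.mpr this]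
    exact integrable_zero_measure
  · have h1 : IntegrableOn (fun t : ℝ => |t| ^ (-(2:ℝ)⁻¹)) (Icc 0 R) := by
      have h : IntegrableOn (fun t : ℝ => t ^ (-(2:ℝ)⁻¹)) (Icc 0 R) := by
        rw [integrableOn_Icc_iff_integrableOn_Ioc]
        have := (intervalIntegral.intervalIntegrable_rpow' (a := 0) (b := R) (r := -(2:ℝ)⁻¹) (by norm_num))
        rwa [intervalIntegrable_iff_integrableOn_Ioc_of_le hR.le] at this
      exact h.congr_fun (fun t ht => by rw [abs_of_nonneg ht.1]) measurableSet_Icc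
    have h2 : IntegrableOn (fun t : ℝ => |t| ^ (-(2:ℝ)⁻¹)) (Icc (-R) 0) := by
      have h1' : Integrable ((Icc 0 R).indicator fun t : ℝ => |t| ^ (-(2:ℝ)⁻¹)) :=
        (integrable_indicator_iff measurableSet_Icc).2 h1
      have hc := h1'.comp_neg
      have heq : (fun t : ℝ => (Icc 0 R).indicator (fun t : ℝ => |t| ^ (-(2:ℝ)⁻¹)) (-t)) =
          (Icc (-R) 0).indicator fun t : ℝ => |t| ^ (-(2:ℝ)⁻¹) := by
        funext t
        by_cases ht : t ∈ Icc (-R) 0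
        · rw [indicator_of_mem ht, indicator_of_mem (by constructor <;>
            [linarith [ht.2]; linarith [ht.1]]), abs_neg]
        · rw [indicator_of_notMem ht, indicator_of_notMem (fun hm => ht
            ⟨by linarith [hm.2], by linarith [hm.1]⟩)]
      rw [heq] at hc
      exact (integrable_indicator_iff measurableSet_Icc).1 hc
    have hU : Icc (-R) R = Icc (-R) 0 ∪ Icc 0 R :=
      (Icc_union_Icc_eq_Icc (by linarith) hR.le).symm
    rw [hU]
    exact h2.union h1

lemma coord_le_norm (x : E2) (i : Fin 2) : |x i| ≤ ‖x‖ := by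
  rw [EuclideanSpace.norm_eq]
  have : |x i| = Real.sqrt (‖x i‖ ^ 2) := by
    rw [Real.norm_eq_abs, sq_abs, Real.sqrt_sq_eq_abs]
  rw [this]
  apply Real.sqrt_le_sqrt
  exact Finset.single_le_sum (f := fun j => ‖x j‖ ^ 2) (fun j _ => by positivity)
    (Finset.mem_univ i)

lemma null_coord (i : Fin 2) : volume {x : E2 | x i = 0} = 0 := by
  let l : E2 →ₗ[ℝ] ℝ :=
    { toFun := fun x => x i, map_add' := fun a b => rfl, map_smul' := fun c a => rfl }
  have : {x : E2 | x i = 0} = (LinearMap.ker l : Set E2) := rfl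
  rw [this]
  apply Measure.addHaar_submodule
  intro htop
  have h1 : (EuclideanSpace.single i (1:ℝ) : E2) ∈ LinearMap.ker l := htop ▸ Submodule.mem_top
  simp only [LinearMap.mem_ker, l, LinearMap.coe_mk, AddHom.coe_mk] at h1
  change (EuclideanSpace.single i (1:ℝ) : E2) i = 0 at h1; rw [EuclideanSpace.single_apply] at h1
  simp at h1

lemma integrable_invnorm_ball (R : ℝ) :
    Integrable ((ball (0:E2) R).indicator fun x => ‖x‖⁻¹) := by
  set f : ℝ → ℝ := (Icc (-R) R).indicator fun t : ℝ => |t| ^ (-(2:ℝ)⁻¹) with hf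
  have hfnn : ∀ t, 0 ≤ f t := fun t =>
    indicator_nonneg (fun s _ => Real.rpow_nonneg (abs_nonneg s) _) t
  have hpi : Integrable (fun x : Fin 2 → ℝ => ∏ i, f (x i)) :=
    Integrable.fin_nat_prod (fun i => integrable_abs_rpow R)
  have hE : Integrable (fun x : E2 => ∏ i, f (x i)) :=
    ((EuclideanSpace.volume_preserving_symm_measurableEquiv_toLp (Fin 2)).integrable_comp_emb
      (MeasurableEquiv.measurableEmbedding _)).2 hpi
  have hmeas : AEStronglyMeasurable ((ball (0:E2) R).indicator fun x : E2 => ‖x‖⁻¹) volume :=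
    ((measurable_norm.inv).indicator measurableSet_ball).aestronglyMeasurable
  refine Integrable.mono' (hE.const_mul (Real.sqrt 2)) hmeas ?_
  have hae : ∀ᵐ x : E2 ∂volume, x 0 ≠ 0 ∧ x 1 ≠ 0 := by
    have h0 := null_coord 0
    have h1 := null_coord 1
    filter_upwards [measure_eq_zero_iff_ae_notMem.mp h0, measure_eq_zero_iff_ae_notMem.mp h1] with x hx0 hx1
    exact ⟨hx0, hx1⟩
  filter_upwards [hae] with x hx
  rw [Real.norm_eq_abs, abs_of_nonneg (indicator_nonneg (fun s _ => by positivity) x)]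
  by_cases hxb : x ∈ ball (0:E2) R
  · rw [indicator_of_mem hxb]
    have hR0 : ∀ i : Fin 2, x i ∈ Icc (-R) R := by
      intro i
      have h := coord_le_norm x i
      have hn : ‖x‖ < R := by simpa [dist_eq_norm] using hxb
      have := abs_le.mp (le_of_lt (lt_of_le_of_lt h hn))
      exact ⟨this.1, this.2⟩
    have hfx : ∀ i : Fin 2, f (x i) = |x i| ^ (-(2:ℝ)⁻¹) := fun i =>
      indicator_of_mem (hR0 i) _
    rw [Fin.prod_univ_two, hfx 0, hfx 1]
    have h0 : (0:ℝ) < |x 0| := abs_pos.mpr hx.1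
    have h1 : (0:ℝ) < |x 1| := abs_pos.mpr hx.2
    have hrp : ∀ t : ℝ, 0 < t → t ^ (-(2:ℝ)⁻¹) = (Real.sqrt t)⁻¹ := by
      intro t ht
      rw [Real.rpow_neg ht.le, Real.sqrt_eq_rpow]
      norm_num
    rw [hrp _ h0, hrp _ h1]
    have hxnorm : Real.sqrt (|x 0| * |x 1|) ≤ ‖x‖ := by
      rw [EuclideanSpace.norm_eq, Fin.sum_univ_two]
      apply Real.sqrt_le_sqrt
      have := sq_nonneg (|x 0| - |x 1|)
      simp only [Real.norm_eq_abs, sq_abs]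
      nlinarith [sq_abs (x 0), sq_abs (x 1)]
    have hxpos : (0:ℝ) < ‖x‖ :=
      lt_of_lt_of_le (Real.sqrt_pos.mpr (by positivity)) hxnorm
    have h2 : ‖x‖⁻¹ ≤ (Real.sqrt (|x 0| * |x 1|))⁻¹ :=
      inv_anti₀ (Real.sqrt_pos.mpr (by positivity)) hxnorm
    have h3 : (Real.sqrt (|x 0| * |x 1|))⁻¹ = (Real.sqrt (|x 0|))⁻¹ * (Real.sqrt (|x 1|))⁻¹ := by
      rw [Real.sqrt_mul (abs_nonneg _), mul_inv]
    calc ‖x‖⁻¹ ≤ (Real.sqrt (|x 0|))⁻¹ * (Real.sqrt (|x 1|))⁻¹ := by rw [← h3]; exact h2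
      _ ≤ Real.sqrt 2 * ((Real.sqrt (|x 0|))⁻¹ * (Real.sqrt (|x 1|))⁻¹) := by
          apply le_mul_of_one_le_left (by positivity)
          rw [show (1:ℝ) = Real.sqrt 1 from (Real.sqrt_one).symm]
          exact Real.sqrt_le_sqrt (by norm_num)
  · rw [indicator_of_notMem hxb]
    exact mul_nonneg (Real.sqrt_nonneg 2) (Finset.prod_nonneg fun i _ => hfnn _)

lemma integrable_kernel {ω : EuclideanSpace ℝ (Fin 2) → ℝ} (hω : Integrable ω volume) {M : ℝ}
    (hbdd : ∀ x, |ω x| ≤ M) (hωsupp : HasCompactSupport ω)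
    {g : EuclideanSpace ℝ (Fin 2) × EuclideanSpace ℝ (Fin 2) → EuclideanSpace ℝ (Fin 2)}
    (hgm : AEStronglyMeasurable g (volume.prod volume))
    {C : ℝ} (hC : ∀ p, ‖g p‖ ≤ C) :
    Integrable (fun p : EuclideanSpace ℝ (Fin 2) × EuclideanSpace ℝ (Fin 2) =>
      ω p.1 * ω p.2 * ⟪perp (biotSavart (p.1 - p.2)), g p⟫) (volume.prod volume) := by
  obtain ⟨R, hR0, hRs⟩ := hωsupp.isBounded.subset_ball_lt 0 0
  have hM : 0 ≤ M := le_trans (abs_nonneg _) (hbdd 0)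
  have hCnn : 0 ≤ C := le_trans (norm_nonneg _) (hC (0, 0))
  -- measurability
  have hKm : Measurable fun p : E2 × E2 => perp (biotSavart (p.1 - p.2)) :=
    perpCLM.continuous.measurable.comp
      (measurable_biotSavart.comp (measurable_fst.sub measurable_snd))
  have hmeas : AEStronglyMeasurable (fun p : E2 × E2 =>
      ω p.1 * ω p.2 * ⟪perp (biotSavart (p.1 - p.2)), g p⟫) (volume.prod volume) := by
    exact ((hω.aestronglyMeasurable.comp_fst.mul hω.aestronglyMeasurable.comp_snd).mul
      (hKm.aestronglyMeasurable.inner hgm))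
  -- dominating function
  set c : ℝ := M * M * C * (2 * π)⁻¹ with hc
  have hcnn : 0 ≤ c := by positivity
  set F₁ : E2 → ℝ := (ball (0:E2) (2*R)).indicator fun z => ‖z‖⁻¹ with hF₁
  set F₂ : E2 → ℝ := (ball (0:E2) R).indicator fun _ => (1:ℝ) with hF₂
  have hF₁nn : ∀ z, 0 ≤ F₁ z := fun z => indicator_nonneg (fun s _ => by positivity) z
  have hF₂nn : ∀ z, 0 ≤ F₂ z := fun z => indicator_nonneg (fun s _ => by positivity) z
  have hF₁i : Integrable F₁ := integrable_invnorm_ball (2*R)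
  have hF₂i : Integrable F₂ := (integrable_indicator_iff measurableSet_ball).2
    (integrableOn_const measure_ball_lt_top.ne)
  have hF₁m : Measurable F₁ := measurable_norm.inv.indicator measurableSet_ball
  have hF₂m : Measurable F₂ := measurable_const.indicator measurableSet_ball
  have hq : Integrable (fun q : E2 × E2 => F₁ q.1 * F₂ q.2) (volume.prod volume) :=
    hF₁i.mul_prod hF₂i
  have hD : Integrable (fun p : E2 × E2 => c * (F₁ (p.1 - p.2) * F₂ p.2))
      (volume.prod volume) := by
    have hmp := measurePreserving_sub_prod (volume : Measure E2) (volume : Measure E2)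
    have := (hmp.integrable_comp
      ((hF₁m.comp measurable_fst).mul (hF₂m.comp measurable_snd)).aestronglyMeasurable).2 hq
    exact (this.const_mul c)
  refine hD.mono' hmeas ?_
  refine Filter.Eventually.of_forall fun p => ?_
  have hDnn : 0 ≤ c * (F₁ (p.1 - p.2) * F₂ p.2) :=
    mul_nonneg hcnn (mul_nonneg (hF₁nn _) (hF₂nn _))
  rw [Real.norm_eq_abs]
  by_cases h1 : p.1 ∈ tsupport ω
  · by_cases h2 : p.2 ∈ tsupport ω
    · have hb1 : ‖p.1‖ < R := by simpa [dist_eq_norm] using hRs h1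
      have hb2 : ‖p.2‖ < R := by simpa [dist_eq_norm] using hRs h2
      have hsub : p.1 - p.2 ∈ ball (0:E2) (2*R) := by
        rw [mem_ball, dist_eq_norm, sub_zero]
        calc ‖p.1 - p.2‖ ≤ ‖p.1‖ + ‖p.2‖ := norm_sub_le _ _
          _ < 2 * R := by linarith
      have h2b : p.2 ∈ ball (0:E2) R := by
        rw [mem_ball, dist_eq_norm, sub_zero]; exact hb2
      rw [hF₁, hF₂]
      rw [indicator_of_mem hsub, indicator_of_mem h2b]
      have hinner : |⟪perp (biotSavart (p.1 - p.2)), g p⟫| ≤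
          (2 * π)⁻¹ * ‖p.1 - p.2‖⁻¹ * C := by
        calc |⟪perp (biotSavart (p.1 - p.2)), g p⟫|
            ≤ ‖perp (biotSavart (p.1 - p.2))‖ * ‖g p‖ := abs_real_inner_le_norm _ _
          _ ≤ (2 * π)⁻¹ * ‖p.1 - p.2‖⁻¹ * C := by
              rw [norm_perp, norm_biotSavart]
              exact mul_le_mul_of_nonneg_left (hC p) (by positivity)
      calc |ω p.1 * ω p.2 * ⟪perp (biotSavart (p.1 - p.2)), g p⟫|
          = |ω p.1| * |ω p.2| * |⟪perp (biotSavart (p.1 - p.2)), g p⟫| := by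
            rw [abs_mul, abs_mul]
        _ ≤ M * M * ((2 * π)⁻¹ * ‖p.1 - p.2‖⁻¹ * C) := by
            apply mul_le_mul (mul_le_mul (hbdd _) (hbdd _) (abs_nonneg _) hM) hinner
              (abs_nonneg _) (by positivity)
        _ = c * (‖p.1 - p.2‖⁻¹ * 1) := by rw [hc]; ring
    · rw [image_eq_zero_of_notMem_tsupport h2]
      simpa using hDnn
  · rw [image_eq_zero_of_notMem_tsupport h1]
    simpa using hDnn

noncomputable def Hbar (φ : EuclideanSpace ℝ (Fin 2) → EuclideanSpace ℝ (Fin 2))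
    (x y : EuclideanSpace ℝ (Fin 2)) : ℝ :=
  (1 / 2 : ℝ) * ⟪perp (biotSavart (x - y)), φ x - φ y⟫

theorem symmetrization_identity
    (ω : EuclideanSpace ℝ (Fin 2) → ℝ) (hω : Integrable ω volume)
    (M : ℝ) (hbdd : ∀ x, |ω x| ≤ M) (hωsupp : HasCompactSupport ω)
    (φ : EuclideanSpace ℝ (Fin 2) → EuclideanSpace ℝ (Fin 2))
    (hφ : ContDiff ℝ 1 φ) (hsupp : HasCompactSupport φ)
    (v : EuclideanSpace ℝ (Fin 2) → EuclideanSpace ℝ (Fin 2))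
    (hv : ∀ x, v x = ∫ y, ω y • biotSavart (x - y)) :
    (∫ x, ω x * ⟪perp (v x), φ x⟫) =
      ∫ p : EuclideanSpace ℝ (Fin 2) × EuclideanSpace ℝ (Fin 2),
        ω p.1 * ω p.2 * Hbar φ p.1 p.2 ∂(volume.prod volume) := by
  obtain ⟨R, hR0, hRs⟩ := hωsupp.isBounded.subset_ball_lt 0 0
  have hM : 0 ≤ M := le_trans (abs_nonneg _) (hbdd 0)
  obtain ⟨C, hC⟩ : ∃ C, ∀ x, ‖φ x‖ ≤ C :=
    hφ.continuous.bounded_above_of_compact_support hsupp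
  -- integrability of the two kernels
  have hF : Integrable (fun p : E2 × E2 =>
      ω p.1 * ω p.2 * ⟪perp (biotSavart (p.1 - p.2)), φ p.1⟫) (volume.prod volume) :=
    integrable_kernel hω hbdd hωsupp
      ((hφ.continuous.comp continuous_fst).aestronglyMeasurable) (fun p => hC p.1)
  have hG : Integrable (fun p : E2 × E2 =>
      ω p.1 * ω p.2 * ⟪perp (biotSavart (p.1 - p.2)), φ p.2⟫) (volume.prod volume) :=
    integrable_kernel hω hbdd hωsupp
      ((hφ.continuous.comp continuous_snd).aestronglyMeasurable) (fun p => hC p.2)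
  -- integrability in y for each fixed x
  have hint : ∀ x : E2, Integrable (fun y => ω y • biotSavart (x - y)) := by
    intro x
    have hmeas : AEStronglyMeasurable (fun y : E2 => ω y • biotSavart (x - y)) volume :=
      hω.aestronglyMeasurable.smul
        ((measurable_biotSavart.comp (measurable_const.sub measurable_id)).aestronglyMeasurable)
    have hDi : Integrable (fun y : E2 =>
        (M * (2 * π)⁻¹) * ((ball (0:E2) (‖x‖ + R)).indicator (fun z => ‖z‖⁻¹) (x - y))) :=
      ((integrable_invnorm_ball (‖x‖ + R)).comp_sub_left x).const_mul _
    refine hDi.mono' hmeas (Filter.Eventually.of_forall fun y => ?_)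
    have hnn : (0:ℝ) ≤ (M * (2 * π)⁻¹) *
        ((ball (0:E2) (‖x‖ + R)).indicator (fun z => ‖z‖⁻¹) (x - y)) :=
      mul_nonneg (by positivity) (indicator_nonneg (fun s _ => by positivity) _)
    rw [norm_smul]
    by_cases hy : y ∈ tsupport ω
    · have hby : ‖y‖ < R := by simpa [dist_eq_norm] using hRs hy
      have hmem : x - y ∈ ball (0:E2) (‖x‖ + R) := by
        rw [mem_ball, dist_eq_norm, sub_zero]
        calc ‖x - y‖ ≤ ‖x‖ + ‖y‖ := norm_sub_le _ _
          _ < ‖x‖ + R := by linarith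
      rw [indicator_of_mem hmem, norm_biotSavart, Real.norm_eq_abs]
      calc |ω y| * ((2 * π)⁻¹ * ‖x - y‖⁻¹) ≤ M * ((2 * π)⁻¹ * ‖x - y‖⁻¹) :=
            mul_le_mul_of_nonneg_right (hbdd y) (by positivity)
        _ = M * (2 * π)⁻¹ * ‖x - y‖⁻¹ := by ring
    · rw [image_eq_zero_of_notMem_tsupport hy]
      simpa using hnn
  -- expand the inner product with v
  have hvinner : ∀ x : E2, ⟪perp (v x), φ x⟫ =
      ∫ y, ω y * ⟪perp (biotSavart (x - y)), φ x⟫ := by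
    intro x
    have h1 : ⟪perp (v x), φ x⟫ = ((innerSL ℝ (φ x)).comp perpCLM) (v x) := by
      rw [real_inner_comm]; rfl
    rw [h1, hv x, ← ContinuousLinearMap.integral_comp_comm _ (hint x)]
    congr 1
    funext y
    rw [ContinuousLinearMap.comp_apply, _root_.map_smul, _root_.map_smul, smul_eq_mul]
    congr 1
    rw [innerSL_apply_apply, perpCLM_apply, real_inner_comm]
  have key : ∀ x : E2, ω x * ⟪perp (v x), φ x⟫ =
      ∫ y, ω x * ω y * ⟪perp (biotSavart (x - y)), φ x⟫ := by
    intro x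
    rw [hvinner x, ← integral_const_mul]
    congr 1
    funext y
    ring
  -- LHS as a product integral
  have hLHS : (∫ x, ω x * ⟪perp (v x), φ x⟫) =
      ∫ p : E2 × E2, ω p.1 * ω p.2 * ⟪perp (biotSavart (p.1 - p.2)), φ p.1⟫
        ∂(volume.prod volume) := by
    rw [show (fun x => ω x * ⟪perp (v x), φ x⟫) =
        fun x => ∫ y, ω x * ω y * ⟪perp (biotSavart (x - y)), φ x⟫ from funext key]
    exact integral_integral (f := fun x y => ω x * ω y * ⟪perp (biotSavart (x - y)), φ x⟫) hF
  -- swap symmetry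
  have hswap : (∫ p : E2 × E2, ω p.1 * ω p.2 * ⟪perp (biotSavart (p.1 - p.2)), φ p.2⟫
        ∂(volume.prod volume)) =
      -∫ p : E2 × E2, ω p.1 * ω p.2 * ⟪perp (biotSavart (p.1 - p.2)), φ p.1⟫
        ∂(volume.prod volume) := by
    have h1 := integral_prod_swap (μ := (volume : Measure E2)) (ν := (volume : Measure E2))
      (fun p : E2 × E2 => ω p.1 * ω p.2 * ⟪perp (biotSavart (p.1 - p.2)), φ p.2⟫)
    rw [← h1]
    have h2 : ∀ p : E2 × E2,
        ω p.2 * ω p.1 * ⟪perp (biotSavart (p.2 - p.1)), φ p.1⟫ =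
        -(ω p.1 * ω p.2 * ⟪perp (biotSavart (p.1 - p.2)), φ p.1⟫) := by
      intro p
      rw [show p.2 - p.1 = -(p.1 - p.2) by abel, biotSavart_neg, perp_neg, inner_neg_left]
      ring
    calc (∫ p : E2 × E2, ω p.2 * ω p.1 * ⟪perp (biotSavart (p.2 - p.1)), φ p.1⟫
          ∂(volume.prod volume))
        = ∫ p : E2 × E2, -(ω p.1 * ω p.2 * ⟪perp (biotSavart (p.1 - p.2)), φ p.1⟫)
          ∂(volume.prod volume) := by
          congr 1; funext p; exact h2 p
      _ = _ := integral_neg _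
  -- RHS
  have hRHS : (∫ p : E2 × E2, ω p.1 * ω p.2 * Hbar φ p.1 p.2 ∂(volume.prod volume)) =
      ∫ p : E2 × E2, ω p.1 * ω p.2 * ⟪perp (biotSavart (p.1 - p.2)), φ p.1⟫
        ∂(volume.prod volume) := by
    have hexp : ∀ p : E2 × E2, ω p.1 * ω p.2 * Hbar φ p.1 p.2 =
        (1/2 : ℝ) * (ω p.1 * ω p.2 * ⟪perp (biotSavart (p.1 - p.2)), φ p.1⟫) -
        (1/2 : ℝ) * (ω p.1 * ω p.2 * ⟪perp (biotSavart (p.1 - p.2)), φ p.2⟫) := by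
      intro p
      rw [Hbar, inner_sub_right]
      ring
    rw [show (fun p : E2 × E2 => ω p.1 * ω p.2 * Hbar φ p.1 p.2) =
        fun p : E2 × E2 =>
          (1/2 : ℝ) * (ω p.1 * ω p.2 * ⟪perp (biotSavart (p.1 - p.2)), φ p.1⟫) -
          (1/2 : ℝ) * (ω p.1 * ω p.2 * ⟪perp (biotSavart (p.1 - p.2)), φ p.2⟫)
      from funext hexp]
    rw [integral_sub (hF.const_mul _) (hG.const_mul _), integral_const_mul, integral_const_mul,
      hswap]
    ring
  rw [hLHS, hRHS]
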